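/- Transition matrix for the multiplicative rational Toda system: let z0, a, b, c, α, β, λ ∈ ℂ with α ≠ 0, β ≠ 0 and all expressions appearing as denominators below nonzero. Define L(z, w, γ, λ) := [[1, w − z + γ], [λγ/(w − z − γ), (w − z + γ)/(w − z − γ)]] and A(z) := [[1, z], [0, 1]]. If the shifted ratio equation ((z0 − a + α)(b − c + α))/((a − b − β)(c − z0 − β)) = α/β holds, then A(c) · L(c, z0, β, λ) · L(z0, a, α, λ) · A(a)⁻¹ = [[1, (β − α)(z0 + b − α − β)/(z0 − b + α − β)], [0, (z0 − b − α + β)/(z0 − b + α − β)]] + (λ/(z0 − b + α − β)) · [[β·b − α·z0, (α − β)(z0·b − αβ)], [β − α, α·b − β·z0]]; in particular this product depends only on z0, b, α, β, λ. -/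

import Mathlib

open Matrix

/-- Transition matrix of the shifted ratio system. -/
noncomputable def srL (z w γ lam : ℂ) : Matrix (Fin 2) (Fin 2) ℂ :=
  !![1, w - z + γ;
     lam * γ / (w - z - γ), (w - z + γ) / (w - z - γ)]

/-- Gauge matrix. -/
def gaugeA (z : ℂ) : Matrix (Fin 2) (Fin 2) ℂ :=
  !![1, z; 0, 1]

private lemma srl_step1 (z0 a c α β lam : ℂ)
    (h1 : z0 - c - β ≠ 0) (h2 : a - z0 - α ≠ 0) :
    gaugeA c * srL c z0 β lam * srL z0 a α lam * !![1, -a; 0, 1] =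
      !![(((z0 - c - β) + c * (lam * β)) * (a - z0 - α) + lam * α * ((z0 - c + β) * (z0 - β))) /
            ((z0 - c - β) * (a - z0 - α)),
         ((a - z0 + α) * (((z0 - c - β) + c * (lam * β)) * (a - z0 - α) + (z0 - c + β) * (z0 - β))
            - a * (((z0 - c - β) + c * (lam * β)) * (a - z0 - α) + lam * α * ((z0 - c + β) * (z0 - β)))) /
            ((z0 - c - β) * (a - z0 - α));
         (lam * β * (a - z0 - α) + lam * α * (z0 - c + β)) / ((z0 - c - β) * (a - z0 - α)),
         ((a - z0 + α) * (lam * β * (a - z0 - α) + (z0 - c + β))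
            - a * (lam * β * (a - z0 - α) + lam * α * (z0 - c + β))) /
            ((z0 - c - β) * (a - z0 - α))] := by
  ext i j
  fin_cases i <;> fin_cases j <;>
    simp only [gaugeA, srL, Matrix.mul_apply, Fin.sum_univ_two,
      Matrix.cons_val', Matrix.cons_val_zero, Matrix.cons_val_one,
      Matrix.head_cons, Matrix.head_fin_const, Matrix.empty_val',
      Matrix.cons_val_fin_one, Matrix.of_apply, Fin.isValue, Fin.zero_eta, Fin.mk_one] <;>
    field_simp <;> ring

private lemma srl_step2 (z0 a b c α β lam : ℂ)
    (h1 : z0 - c - β ≠ 0) (h2 : a - z0 - α ≠ 0)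
    (h5 : z0 - b + α - β ≠ 0)
    (hsr : (z0 - a + α) * (b - c + α) * β = α * ((a - b - β) * (c - z0 - β))) :
    (!![(((z0 - c - β) + c * (lam * β)) * (a - z0 - α) + lam * α * ((z0 - c + β) * (z0 - β))) /
            ((z0 - c - β) * (a - z0 - α)),
         ((a - z0 + α) * (((z0 - c - β) + c * (lam * β)) * (a - z0 - α) + (z0 - c + β) * (z0 - β))
            - a * (((z0 - c - β) + c * (lam * β)) * (a - z0 - α) + lam * α * ((z0 - c + β) * (z0 - β)))) /
            ((z0 - c - β) * (a - z0 - α));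
         (lam * β * (a - z0 - α) + lam * α * (z0 - c + β)) / ((z0 - c - β) * (a - z0 - α)),
         ((a - z0 + α) * (lam * β * (a - z0 - α) + (z0 - c + β))
            - a * (lam * β * (a - z0 - α) + lam * α * (z0 - c + β))) /
            ((z0 - c - β) * (a - z0 - α))] : Matrix (Fin 2) (Fin 2) ℂ) =
      !![1, (β - α) * (z0 + b - α - β) / (z0 - b + α - β);
         0, (z0 - b - α + β) / (z0 - b + α - β)] +
        (lam / (z0 - b + α - β)) •
          !![β * b - α * z0, (α - β) * (z0 * b - α * β);
             β - α, α * b - β * z0] := by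
  have h12 : (z0 - c - β) * (a - z0 - α) ≠ 0 := mul_ne_zero h1 h2
  ext i j
  fin_cases i <;> fin_cases j <;>
    simp only [Matrix.add_apply, Matrix.smul_apply, Matrix.cons_val', Matrix.cons_val_zero,
      Matrix.cons_val_one, Matrix.head_cons, Matrix.head_fin_const, Matrix.empty_val',
      Matrix.cons_val_fin_one, Matrix.of_apply, smul_eq_mul, Fin.isValue,
      Fin.zero_eta, Fin.mk_zero, Fin.mk_one, Matrix.cons_val_zero]
  · rw [show (1 : ℂ) + lam / (z0 - b + α - β) * (β * b - α * z0)
        = ((z0 - b + α - β) + lam * (β * b - α * z0)) / (z0 - b + α - β) by field_simp,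
      div_eq_div_iff h12 h5]
    linear_combination (lam * (z0 - β)) * hsr
  · rw [show (β - α) * (z0 + b - α - β) / (z0 - b + α - β)
          + lam / (z0 - b + α - β) * ((α - β) * (z0 * b - α * β))
        = ((β - α) * (z0 + b - α - β) + lam * ((α - β) * (z0 * b - α * β))) / (z0 - b + α - β) by
          field_simp,
      div_eq_div_iff h12 h5]
    linear_combination (2 * (z0 - β) - lam * (z0 + α) * (z0 - β)) * hsr
  · rw [show (0 : ℂ) + lam / (z0 - b + α - β) * (β - α)
        = (lam * (β - α)) / (z0 - b + α - β) by field_simp; ring,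
      div_eq_div_iff h12 h5]
    linear_combination lam * hsr
  · rw [show (z0 - b - α + β) / (z0 - b + α - β) + lam / (z0 - b + α - β) * (α * b - β * z0)
        = ((z0 - b - α + β) + lam * (α * b - β * z0)) / (z0 - b + α - β) by field_simp,
      div_eq_div_iff h12 h5]
    linear_combination (2 - lam * (z0 + α)) * hsr

set_option maxHeartbeats 1000000 in
theorem multiplicative_rational_Toda_transition_matrix
    (z0 a b c α β lam : ℂ)
    (hα : α ≠ 0) (hβ : β ≠ 0)
    (h1 : z0 - c - β ≠ 0) (h2 : a - z0 - α ≠ 0)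
    (h3 : a - b - β ≠ 0) (h4 : c - z0 - β ≠ 0)
    (h5 : z0 - b + α - β ≠ 0)
    (hsr : (z0 - a + α) * (b - c + α) / ((a - b - β) * (c - z0 - β)) = α / β) :
    gaugeA c * srL c z0 β lam * srL z0 a α lam * (gaugeA a)⁻¹ =
      !![1, (β - α) * (z0 + b - α - β) / (z0 - b + α - β);
         0, (z0 - b - α + β) / (z0 - b + α - β)] +
        (lam / (z0 - b + α - β)) •
          !![β * b - α * z0, (α - β) * (z0 * b - α * β);
             β - α, α * b - β * z0] := by
  rw [div_eq_div_iff (mul_ne_zero h3 h4) hβ] at hsr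
  have hinv : (gaugeA a)⁻¹ = !![1, -a; 0, 1] := by
    apply inv_eq_right_inv
    ext i j
    fin_cases i <;> fin_cases j <;>
      simp [gaugeA, Matrix.mul_apply, Fin.sum_univ_two]
  rw [hinv, srl_step1 z0 a c α β lam h1 h2, srl_step2 z0 a b c α β lam h1 h2 h5 hsr]
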